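/- arXiv:1707.01755 — 3 statements merged into one kernel-verified Lean document; each statement's English description precedes it below -/
import Mathlib

section
/- Let c be a prime power, let d ≥ 1 be an integer, and let q be a prime number not dividing d. Then φ(c^{d·q} - 1) ≥ d · φ(c^q - 1), where φ denotes Euler's totient function. -/
lemma odd_le_totient_sq : ∀ s : ℕ, Odd s → s ≤ s.totient ^ 2 := by
  intro s
  induction s using Nat.strong_induction_on with
  | _ s ih =>
    intro hs
    rcases eq_or_ne s 1 with rfl | hs1
    · simp
    have hs0 : 0 < s := hs.pos
    set p := s.minFac with hp
    have hpp : p.Prime := Nat.minFac_prime hs1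
    have hpd : p ∣ s := Nat.minFac_dvd s
    have hp3 : 3 ≤ p := by
      rcases hpp.eq_two_or_odd' with h | h
      · exfalso
        rw [← Nat.not_even_iff_odd] at hs
        exact hs (even_iff_two_dvd.mpr (h ▸ hpd))
      · have h2 := hpp.two_le
        rcases Nat.lt_or_ge p 3 with hlt | hge
        · exfalso; have : p = 2 := by omega
          rw [this] at h; exact absurd h (by decide)
        · exact hge
    set a := s.factorization p with ha
    have ha1 : 1 ≤ a := (Nat.Prime.factorization_pos_of_dvd hpp hs0.ne' hpd)
    set t := s / p ^ a with htdef
    have hst : p ^ a * t = s := Nat.ordProj_mul_ordCompl_eq_self s p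
    have hpt : ¬ p ∣ t := Nat.not_dvd_ordCompl hpp hs0.ne'
    have htd : t ∣ s := Nat.ordCompl_dvd s p
    have htodd : Odd t := by
      rw [← Nat.not_even_iff_odd, even_iff_two_dvd]
      intro h2
      rw [← Nat.not_even_iff_odd, even_iff_two_dvd] at hs
      exact hs (h2.trans htd)
    have ht0 : 0 < t := htodd.pos
    have htlt : t < s := by
      have hpa : 1 < p ^ a := by
        calc 1 < p := by omega
        _ ≤ p ^ a := Nat.le_self_pow (by omega) p
      calc t = 1 * t := (one_mul t).symm
        _ < p ^ a * t := by exact Nat.mul_lt_mul_of_lt_of_le hpa (le_refl t) ht0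
        _ = s := hst
    have hcop : Nat.Coprime (p ^ a) t :=
      Nat.Coprime.pow_left a ((Nat.Prime.coprime_iff_not_dvd hpp).mpr hpt)
    have hphi : s.totient = (p ^ a).totient * t.totient := by
      rw [← hst]; exact Nat.totient_mul hcop
    have hpa_phi : (p ^ a).totient = p ^ (a - 1) * (p - 1) := Nat.totient_prime_pow hpp ha1
    have hkey : p ^ a ≤ ((p ^ a).totient) ^ 2 := by
      rw [hpa_phi]
      obtain ⟨r, hr⟩ : ∃ r, p = r + 3 := ⟨p - 3, by omega⟩
      have h1 : p ≤ (p - 1) ^ 2 := by rw [hr, show r + 3 - 1 = r + 2 from rfl]; nlinarith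
      calc p ^ a = p ^ (a - 1) * p := by rw [← pow_succ]; congr 1; omega
        _ ≤ p ^ (a - 1) * (p - 1) ^ 2 := Nat.mul_le_mul_left _ h1
        _ ≤ (p ^ (a - 1)) ^ 2 * (p - 1) ^ 2 := Nat.mul_le_mul_right _ (Nat.le_self_pow two_ne_zero _)
        _ = (p ^ (a - 1) * (p - 1)) ^ 2 := (mul_pow _ _ _).symm
    calc s = p ^ a * t := hst.symm
      _ ≤ ((p ^ a).totient) ^ 2 * t.totient ^ 2 := Nat.mul_le_mul hkey (ih t htlt htodd)
      _ = s.totient ^ 2 := by rw [hphi, mul_pow]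

lemma le_two_mul_totient_sq (k : ℕ) (hk : 0 < k) : k ≤ 2 * k.totient ^ 2 := by
  set a := k.factorization 2 with ha
  set t := k / 2 ^ a with htdef
  have hst : 2 ^ a * t = k := Nat.ordProj_mul_ordCompl_eq_self k 2
  have hpt : ¬ 2 ∣ t := Nat.not_dvd_ordCompl Nat.prime_two hk.ne'
  have htodd : Odd t := Nat.odd_iff.mpr (by omega)
  have hcop : Nat.Coprime (2 ^ a) t :=
    Nat.Coprime.pow_left a ((Nat.Prime.coprime_iff_not_dvd Nat.prime_two).mpr hpt)
  have hphi : k.totient = (2 ^ a).totient * t.totient := by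
    rw [← hst]; exact Nat.totient_mul hcop
  have hkey : 2 ^ a ≤ 2 * ((2 ^ a).totient) ^ 2 := by
    rcases Nat.eq_zero_or_pos a with h0 | h1
    · simp [h0]
    · rw [Nat.totient_prime_pow Nat.prime_two h1]
      have : 2 ^ a = 2 * 2 ^ (a - 1) := by rw [← pow_succ']; congr 1; omega
      rw [this]
      have h2 : 2 ^ (a - 1) ≤ (2 ^ (a - 1) * (2 - 1)) ^ 2 := by
        simpa using Nat.le_self_pow two_ne_zero (2 ^ (a - 1))
      exact Nat.mul_le_mul_left 2 h2
  calc k = 2 ^ a * t := hst.symm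
    _ ≤ (2 * ((2 ^ a).totient) ^ 2) * t.totient ^ 2 :=
        Nat.mul_le_mul hkey (odd_le_totient_sq t htodd)
    _ = 2 * k.totient ^ 2 := by rw [hphi, mul_pow]; ring

lemma two_sq_lt_four_pow (d : ℕ) : 2 * d ^ 2 < 4 ^ d := by
  induction d with
  | zero => norm_num
  | succ n ih =>
    rcases Nat.eq_zero_or_pos n with rfl | hn
    · norm_num
    · have h1 : 2 * (n + 1) ^ 2 ≤ 4 * (2 * n ^ 2) := by nlinarith
      calc 2 * (n + 1) ^ 2 ≤ 4 * (2 * n ^ 2) := h1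
        _ < 4 * 4 ^ n := by omega
        _ = 4 ^ (n + 1) := (pow_succ' 4 n).symm

lemma nat_geom_identity (t d : ℕ) (ht : 1 ≤ t) :
    (t - 1) * ∑ i ∈ Finset.range d, t ^ i = t ^ d - 1 := by
  have h1 : (1 : ℕ) ≤ t ^ d := Nat.one_le_pow _ _ ht
  have := geom_sum_mul (t : ℤ) d
  have hcast : ((t - 1 : ℕ) : ℤ) * ((∑ i ∈ Finset.range d, t ^ i : ℕ) : ℤ)
      = ((t ^ d - 1 : ℕ) : ℤ) := by
    push_cast [Nat.cast_sub ht, Nat.cast_sub h1]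
    linarith [this]
  exact_mod_cast (by rw [← Nat.cast_mul] at hcast; exact_mod_cast hcast)

/-- Let `c` be a prime power, `d ≥ 1` an integer, and `q` a prime not dividing `d`.
Then `φ(c ^ (d * q) - 1) ≥ d * φ(c ^ q - 1)`, where `φ` is Euler's totient function. -/
theorem totient_pow_sub_one_ge
    (c d q : ℕ) (hc : IsPrimePow c) (hd : 1 ≤ d) (hq : q.Prime) (hqd : ¬ q ∣ d) :
    d * Nat.totient (c ^ q - 1) ≤ Nat.totient (c ^ (d * q) - 1) := by
  have hc2 : 2 ≤ c := hc.two_le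
  have hq2 : 2 ≤ q := hq.two_le
  set t := c ^ q with htdef
  have ht4 : 4 ≤ t := by
    calc (4 : ℕ) = 2 ^ 2 := rfl
      _ ≤ 2 ^ q := Nat.pow_le_pow_right (by norm_num) hq2
      _ ≤ c ^ q := Nat.pow_le_pow_left hc2 q
  have ht1 : 1 ≤ t := by omega
  set m := ∑ i ∈ Finset.range d, t ^ i with hmdef
  have hN : c ^ (d * q) - 1 = (t - 1) * m := by
    rw [mul_comm d q, pow_mul, ← htdef, nat_geom_identity t d ht1]
  have hm_ge : t ^ (d - 1) ≤ m := by
    apply Finset.single_le_sum (f := fun i => t ^ i) (fun i _ => Nat.zero_le _)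
    exact Finset.mem_range.mpr (by omega)
  have hm_pos : 0 < m := lt_of_lt_of_le (Nat.pow_pos (by omega)) hm_ge
  have hdm : d ≤ m.totient := by
    by_contra h
    push_neg at h
    have h1 : m.totient ≤ d - 1 := by omega
    have h2 : m ≤ 2 * (d - 1) ^ 2 :=
      (le_two_mul_totient_sq m hm_pos).trans (by
        have := Nat.pow_le_pow_left h1 2
        omega)
    have h3 : 2 * (d - 1) ^ 2 < 4 ^ (d - 1) := two_sq_lt_four_pow (d - 1)
    have h4 : 4 ^ (d - 1) ≤ t ^ (d - 1) := Nat.pow_le_pow_left ht4 (d - 1)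
    omega
  calc d * Nat.totient (c ^ q - 1) = d * Nat.totient (t - 1) := rfl
    _ ≤ m.totient * Nat.totient (t - 1) := Nat.mul_le_mul_right _ hdm
    _ ≤ Nat.totient ((t - 1) * m) := by
        rw [mul_comm (t - 1) m]; exact Nat.totient_super_multiplicative m (t - 1)
    _ = Nat.totient (c ^ (d * q) - 1) := by rw [hN]
end

section
/- Let F be a finite field with c elements and let r ≥ 1 be an integer. Then the number of monic irreducible polynomials of degree r in F[X] is at least φ(c^r - 1)/r, where φ is Euler's totient function. Equivalently, every generator of the multiplicative group of the field with c^r elements has degree exactly r over F, and the generators fall into orbits of size r under the Frobenius, each orbit giving a distinct monic irreducible polynomial of degree r. -/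
open Polynomial

noncomputable section

lemma gen_minpoly_natDegree_aux (F : Type*) [Field F] [Fintype F] (c r : ℕ)
    (hc : Fintype.card F = c) (hr : 1 ≤ r)
    (E : Type*) [Field E] [Algebra F E] [Fintype E] (hE : Fintype.card E = c ^ r)
    (x : Eˣ) (hx : ∀ z : Eˣ, z ∈ Subgroup.zpowers x) :
    (minpoly F (x : E)).natDegree = r := by
  have hfr : Module.finrank F E = r := by
    have h1 : Fintype.card E = Fintype.card F ^ Module.finrank F E := Module.card_eq_pow_finrank
    rw [hE, hc] at h1
    have hc2 : 2 ≤ c := hc ▸ Fintype.one_lt_card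
    exact (Nat.pow_right_injective hc2 h1).symm
  have hint : IsIntegral F ((x : E)) := .of_finite F _
  have htop : IntermediateField.adjoin F {(x : E)} = ⊤ := by
    rw [eq_top_iff]
    intro z _
    by_cases hz : z = 0
    · rw [hz]; exact zero_mem _
    · obtain ⟨n, hn⟩ := hx (Units.mk0 z hz)
      have hn' : x ^ n = Units.mk0 z hz := hn
      have hz2 : z = ((x ^ n : Eˣ) : E) := by rw [hn']; rfl
      rw [hz2, Units.val_zpow_eq_zpow_val]
      exact zpow_mem (IntermediateField.mem_adjoin_simple_self F _) n
  have h2 := IntermediateField.adjoin.finrank hint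
  rw [htop, IntermediateField.finrank_top'] at h2
  rw [← h2, hfr]

universe u in
lemma exists_finite_ext (F : Type u) [Field F] [Fintype F] (r : ℕ) (hr : r ≠ 0) :
    ∃ (E : Type u) (_ : Field E) (_ : Algebra F E) (_ : Fintype E),
      Fintype.card E = Fintype.card F ^ r := by
  obtain ⟨p, hCharP⟩ := CharP.exists F
  haveI := hCharP
  obtain ⟨k, hp, hcard⟩ := FiniteField.card F p
  haveI := Fact.mk hp
  set m := (k : ℕ) * r with hm_def
  have hm : m ≠ 0 := mul_ne_zero k.ne_zero hr
  set g : F[X] := X ^ p ^ m - X with hg_def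
  set E := g.SplittingField with hE_def
  haveI : Finite E := Module.finite_of_finite F
  haveI : Fintype E := Fintype.ofFinite E
  haveI : CharP E p := charP_of_injective_algebraMap (algebraMap F E).injective p
  haveI : ExpChar E p := ExpChar.prime hp
  have hp1 : 1 < p := hp.one_lt
  have aux : g ≠ 0 := FiniteField.X_pow_card_pow_sub_X_ne_zero _ hm hp1
  have key : Fintype.card (g.rootSet E) = g.natDegree :=
    card_rootSet_eq_natDegree (galois_poly_separable p _ (dvd_pow dvd_rfl hm))
      (SplittingField.splits g)
  have hdeg : g.natDegree = p ^ m := FiniteField.X_pow_card_pow_sub_X_natDegree_eq _ hm hp1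
  have huniv : g.rootSet E = Set.univ := by
    have hle : Algebra.adjoin F (g.rootSet E) = ⊤ := SplittingField.adjoin_rootSet g
    rw [Set.eq_univ_iff_forall]
    intro z
    have hz : z ∈ (⊤ : Subalgebra F E) := trivial
    rw [← hle, Algebra.mem_adjoin_iff] at hz
    set S : Subring E := RingHom.eqLocus (iterateFrobenius E p m) (RingHom.id E) with hS_def
    have hzS : z ∈ S := by
      refine Subring.closure_le.mpr ?_ hz
      rintro y (⟨a, rfl⟩ | hy)
      · show iterateFrobenius E p m _ = RingHom.id E _
        rw [iterateFrobenius_def, RingHom.id_apply, ← map_pow]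
        congr 1
        calc a ^ p ^ m = a ^ Fintype.card F ^ r := by rw [hcard, ← pow_mul]
          _ = a := FiniteField.pow_card_pow r a
      · rw [mem_rootSet_of_ne aux] at hy
        show iterateFrobenius E p m y = RingHom.id E y
        rw [iterateFrobenius_def, RingHom.id_apply]
        simp only [hg_def, map_sub, map_pow, aeval_X, sub_eq_zero] at hy
        exact hy
    rw [mem_rootSet_of_ne aux]
    have hzz : iterateFrobenius E p m z = RingHom.id E z := hzS
    rw [iterateFrobenius_def, RingHom.id_apply] at hzz
    simp [hg_def, sub_eq_zero, hzz]
  have key' : Nat.card (g.rootSet E) = g.natDegree := Nat.card_eq_fintype_card.trans key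
  rw [huniv] at key'
  refine ⟨E, inferInstance, inferInstance, inferInstance, ?_⟩
  rw [hcard, ← pow_mul, ← hm_def, ← hdeg, ← key', Nat.card_eq_fintype_card]
  exact (Fintype.card_congr (Equiv.Set.univ E)).symm

/-- Let `F` be a finite field with `c` elements and `r ≥ 1`.  Then the number of monic
irreducible polynomials of degree `r` in `F[X]` is at least `φ(c ^ r - 1) / r`.
Moreover, every generator of the multiplicative group of the field with `c ^ r`
elements has degree exactly `r` over `F`. -/
theorem count_irreducible_ge_totient_div
    (F : Type*) [Field F] [Fintype F] (c r : ℕ) (hc : Fintype.card F = c)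
    (hr : 1 ≤ r) :
    Nat.totient (c ^ r - 1) / r ≤
      Nat.card {f : Polynomial F // f.Monic ∧ Irreducible f ∧ f.natDegree = r} ∧
    ∀ (E : Type) [Field E] [Algebra F E] [Fintype E], Fintype.card E = c ^ r →
      ∀ x : Eˣ, (∀ z : Eˣ, z ∈ Subgroup.zpowers x) →
        (minpoly F (x : E)).natDegree = r := by
  classical
  constructor
  · obtain ⟨E, instF, instA, instT, hcardE⟩ := exists_finite_ext F r (by omega)
    rw [hc] at hcardE
    haveI : Finite {f : Polynomial F // f.Monic ∧ Irreducible f ∧ f.natDegree = r} := by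
      apply Finite.of_injective (fun (f : {f : Polynomial F // f.Monic ∧ Irreducible f ∧ f.natDegree = r}) => (fun i : Fin (r + 1) => f.1.coeff i))
      intro f g h
      ext n
      rcases lt_or_ge n (r + 1) with hn | hn
      · exact congrFun h ⟨n, hn⟩
      · rw [Polynomial.coeff_eq_zero_of_natDegree_lt (by rw [f.2.2.2]; omega),
          Polynomial.coeff_eq_zero_of_natDegree_lt (by rw [g.2.2.2]; omega)]
    set T := {f : Polynomial F // f.Monic ∧ Irreducible f ∧ f.natDegree = r} with hT
    set φ : Eˣ → F[X] := fun x => minpoly F (x : E) with hφ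
    set s : Finset Eˣ := {a : Eˣ | orderOf a = Fintype.card Eˣ} with hs_def
    have hgen : ∀ x ∈ s, ∀ z : Eˣ, z ∈ Subgroup.zpowers x := by
      intro x hxs z
      rw [hs_def, Finset.mem_filter] at hxs
      have : Subgroup.zpowers x = ⊤ := by
        apply Subgroup.eq_top_of_card_eq
        rw [Nat.card_zpowers, hxs.2, Nat.card_eq_fintype_card]
      rw [this]; trivial
    have hdeg : ∀ x ∈ s, (φ x).natDegree = r := fun x hxs =>
      gen_minpoly_natDegree_aux F c r hc hr E hcardE x (hgen x hxs)
    have hint : ∀ x : Eˣ, IsIntegral F ((x : E)) := fun x => .of_finite F _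
    have hmem : ∀ x ∈ s, φ x ∈ {f : F[X] | f.Monic ∧ Irreducible f ∧ f.natDegree = r} :=
      fun x hxs => ⟨minpoly.monic (hint x), minpoly.irreducible (hint x), hdeg x hxs⟩
    have hs_card : s.card = Nat.totient (c ^ r - 1) := by
      rw [hs_def, IsCyclic.card_orderOf_eq_totient dvd_rfl, Fintype.card_units, hcardE]
    -- fiber bound
    have hfiber : ∀ a ∈ s.image φ, (s.filter fun x => φ x = a).card ≤ r := by
      intro a ha
      obtain ⟨x0, hx0s, hx0⟩ := Finset.mem_image.mp ha
      have hadeg : a.natDegree = r := hx0 ▸ hdeg x0 hx0s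
      have hane : a ≠ 0 := fun h => by
        have := (hx0 ▸ minpoly.monic (hint x0) : a.Monic)
        exact this.ne_zero h
      have hmapne : a.map (algebraMap F E) ≠ 0 := by
        simpa using hane
      have hsub : ((s.filter fun x => φ x = a).image (fun x : Eˣ => (x : E))) ⊆
          (a.map (algebraMap F E)).roots.toFinset := by
        intro y hy
        obtain ⟨x, hxmem, rfl⟩ := Finset.mem_image.mp hy
        rw [Finset.mem_filter] at hxmem
        rw [Multiset.mem_toFinset, mem_roots hmapne, IsRoot.def, eval_map, ← aeval_def,
          ← hxmem.2]
        exact minpoly.aeval F _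
      calc (s.filter fun x => φ x = a).card
          = ((s.filter fun x => φ x = a).image (fun x : Eˣ => (x : E))).card := by
            rw [Finset.card_image_of_injective _ Units.val_injective]
        _ ≤ (a.map (algebraMap F E)).roots.toFinset.card := Finset.card_le_card hsub
        _ ≤ Multiset.card (a.map (algebraMap F E)).roots := Multiset.toFinset_card_le _
        _ ≤ (a.map (algebraMap F E)).natDegree := Polynomial.card_roots' _
        _ ≤ r := by rw [natDegree_map, hadeg]
    have h1 : s.card ≤ r * (s.image φ).card := Finset.card_le_mul_card_image s r hfiber
    have h2 : (s.image φ).card ≤ Nat.card T := by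
      have hinj : Function.Injective
          (fun a : (s.image φ : Finset F[X]) => (⟨a.1, by
            obtain ⟨x, hxs, hx⟩ := Finset.mem_image.mp a.2
            exact hx ▸ hmem x hxs⟩ : T)) := by
        intro a b hab
        simp only [Subtype.mk.injEq] at hab
        exact Subtype.ext hab
      have := Nat.card_le_card_of_injective _ hinj
      rwa [Nat.card_eq_finsetCard] at this
    calc Nat.totient (c ^ r - 1) / r = s.card / r := by rw [hs_card]
      _ ≤ r * Nat.card T / r := Nat.div_le_div_right (h1.trans (Nat.mul_le_mul_left r h2))
      _ = Nat.card T := Nat.mul_div_cancel_left _ (by omega)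
  · intro E _ _ _ hE x hx
    exact gen_minpoly_natDegree_aux F c r hc hr E hE x hx

end
end

section
/- Let k be a finite field, let l be a finite field extension of k of degree d₀, let V be a finite index set, and let (e_v)_{v∈V} be a family of positive integers. Then there exists an integer N such that for every prime number q ≥ N, every family (M_v)_{v∈V} of finite field extensions of k with [M_v : k] = d₀ · e_v · q for each v, and every finite field extension E of k with [E : k] = d₀ · (q - 1), there exists a surjective k-algebra homomorphism from the polynomial ring k[t] onto the product k-algebra (∏_{v∈V} M_v) × l × E. -/
open Polynomial Module



private lemma my_sq_le_two_pow {m : ℕ} (hm : 4 ≤ m) : m * m ≤ 2 ^ m := by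
  induction m, hm using Nat.le_induction with
  | base => norm_num
  | succ m hm ih =>
    have h1 : 2 * m + 1 ≤ m * m := by nlinarith
    calc (m + 1) * (m + 1) = m * m + (2 * m + 1) := by ring
      _ ≤ 2 ^ m + 2 ^ m := by omega
      _ = 2 ^ (m + 1) := by ring

private lemma my_growth_bound (K : ℕ) : ∀ n, 8 * K + 16 ≤ n → n * (K + 1) ≤ 2 ^ (n / 2) := by
  intro n hn
  have hm4 : 4 ≤ n / 2 := by omega
  have hmK : 4 * (K + 1) ≤ n / 2 := by omega
  have h1 : n ≤ 4 * (n / 2) := by omega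
  calc n * (K + 1) ≤ (4 * (n / 2)) * (K + 1) := Nat.mul_le_mul_right _ h1
    _ = (4 * (K + 1)) * (n / 2) := by ring
    _ ≤ (n / 2) * (n / 2) := Nat.mul_le_mul_right _ hmK
    _ ≤ 2 ^ (n / 2) := my_sq_le_two_pow hm4

private lemma my_crt {R : Type*} [CommRing R] {ι : Type*} [Finite ι] (I : ι → Ideal R)
    (h : Pairwise (Function.onFun IsCoprime I)) (x : ι → R) : ∃ r : R, ∀ i, r - x i ∈ I i := by
  obtain ⟨y, hy⟩ := Ideal.quotientInfToPiQuotient_surj h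
    (fun i => Ideal.Quotient.mk (I i) (x i))
  obtain ⟨r, rfl⟩ := Ideal.Quotient.mk_surjective y
  refine ⟨r, fun i => ?_⟩
  have h2 := congrFun hy i
  rw [Ideal.quotientInfToPiQuotient_mk'] at h2
  exact Ideal.Quotient.eq.mp h2

private lemma my_coprime {k : Type*} [Field k] {f g : k[X]} (hf : f.Monic) (hg : g.Monic)
    (hif : Irreducible f) (hig : Irreducible g) (h : f ≠ g) : IsCoprime f g := by
  refine isCoprime_of_irreducible_dvd (fun ⟨h1, _⟩ => hif.ne_zero h1) (fun z hz hzf hzg => ?_)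
  have h1 : Associated z f := hz.associated_of_dvd hif hzf
  have h2 : Associated z g := hz.associated_of_dvd hig hzg
  exact h (Polynomial.eq_of_monic_of_associated hf hg (h1.symm.trans h2))


-- surjection from any monic irreducible polynomial of the right degree
private lemma my_aeval_surj (k F : Type*) [Field k] [Fintype k] [Field F] [Algebra k F]
    [FiniteDimensional k F] (f : k[X]) (hm : f.Monic) (hi : Irreducible f)
    (hdeg : f.natDegree = finrank k F) :
    ∃ α : F, minpoly k α = f ∧ Function.Surjective (Polynomial.aeval α : k[X] →ₐ[k] F) := by
  have hFfin : Finite F := Module.finite_of_finite k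
  have : Fintype F := Fintype.ofFinite F
  set c := Fintype.card k with hc
  have hn1 : 0 < finrank k F := finrank_pos
  have hc2 : 1 < c := Fintype.one_lt_card
  -- f divides X ^ c ^ n - X
  have hf0 : f ≠ 0 := hm.ne_zero
  haveI : Fact (Irreducible f) := ⟨hi⟩
  have hdvd : f ∣ (X : k[X]) ^ c ^ finrank k F - X := by
    set K := AdjoinRoot f
    have : FiniteDimensional k K :=
      Module.Finite.of_basis (AdjoinRoot.powerBasis hf0).basis
    have hKfin : Finite K := Module.finite_of_finite k
    have : Fintype K := Fintype.ofFinite K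
    have hfr : finrank k K = f.natDegree := (AdjoinRoot.powerBasis hf0).finrank
    have hcard : Fintype.card K = c ^ finrank k F := by
      rw [card_eq_pow_finrank (K := k), hfr, hdeg]
    have hmin : minpoly k (AdjoinRoot.root f) = f := by
      rw [AdjoinRoot.minpoly_root hf0, hm.leadingCoeff, inv_one, map_one, mul_one]
    have hroot : (Polynomial.aeval (AdjoinRoot.root f))
        ((X : k[X]) ^ c ^ finrank k F - X) = 0 := by
      rw [map_sub, map_pow, Polynomial.aeval_X, ← hcard, FiniteField.pow_card, sub_self]
    rw [← hmin]
    exact minpoly.dvd k _ hroot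
  -- X ^ c ^ n - X splits in F
  have hcardF : Fintype.card F = c ^ finrank k F := card_eq_pow_finrank (K := k)
  have hne : ((X : k[X]) ^ c ^ finrank k F - X) ≠ 0 :=
    FiniteField.X_pow_card_pow_sub_X_ne_zero k hn1.ne' hc2
  have hsplits : Splits (((X : k[X]) ^ c ^ finrank k F - X).map (algebraMap k F)) := by
    rw [Polynomial.map_sub, Polynomial.map_pow,
      Polynomial.map_X, Polynomial.splits_iff_card_roots, ← hcardF,
      FiniteField.roots_X_pow_card_sub_X,
      FiniteField.X_pow_card_sub_X_natDegree_eq F (hcardF ▸ Nat.one_lt_pow hn1.ne' hc2)]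
    simp
  have hfsplits : Splits (f.map (algebraMap k F)) :=
    hsplits.of_dvd (Polynomial.map_ne_zero hne) (Polynomial.map_dvd _ hdvd)
  have hdeg0 : f.degree ≠ 0 := by
    rw [Polynomial.degree_eq_natDegree hf0, hdeg]
    exact_mod_cast hn1.ne'
  obtain ⟨α, hα⟩ := hfsplits.exists_eval_eq_zero (by rwa [Polynomial.degree_map])
  have haev : (Polynomial.aeval α) f = 0 := by rwa [Polynomial.aeval_def, Polynomial.eval₂_eq_eval_map]
  have hmin : minpoly k α = f := (minpoly.eq_of_irreducible_of_monic hi haev hm).symm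
  refine ⟨α, hmin, ?_⟩
  have hint : IsIntegral k α := IsIntegral.of_finite k α
  have htop : IntermediateField.adjoin k {α} = ⊤ := by
    rw [Field.primitive_element_iff_minpoly_natDegree_eq, hmin, hdeg]
  have hrange : (Polynomial.aeval α : k[X] →ₐ[k] F).range = ⊤ := by
    rw [← Algebra.adjoin_singleton_eq_range_aeval,
      ← IntermediateField.adjoin_simple_toSubalgebra_of_isAlgebraic hint.isAlgebraic, htop]
    rfl
  exact (AlgHom.range_eq_top _).mp hrange

-- primitive element: existence of an irreducible polynomial of the degree of any extension
private lemma my_exists_irred (k F : Type*) [Field k] [Fintype k] [Field F] [Algebra k F]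
    [FiniteDimensional k F] :
    ∃ f : k[X], f.Monic ∧ Irreducible f ∧ f.natDegree = finrank k F := by
  obtain ⟨β, hβ⟩ := Field.exists_primitive_element k F
  have hint : IsIntegral k β := IsIntegral.of_finite k β
  exact ⟨minpoly k β, minpoly.monic hint, minpoly.irreducible hint,
    (Field.primitive_element_iff_minpoly_natDegree_eq k β).mp hβ⟩


private lemma my_many_irred (k F : Type*) [Field k] [Fintype k] [Field F] [Algebra k F]
    [FiniteDimensional k F] (K : ℕ)
    (hK : finrank k F * (K + 1) ≤ 2 ^ (finrank k F / 2)) :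
    ∃ S : Finset k[X], K ≤ S.card ∧
      ∀ f ∈ S, f.Monic ∧ Irreducible f ∧ f.natDegree = finrank k F := by
  classical
  have hFfin : Finite F := Module.finite_of_finite k
  have : Fintype F := Fintype.ofFinite F
  set c := Fintype.card k with hc
  set n := finrank k F with hn
  have hn1 : 0 < n := finrank_pos
  have hc2 : 1 < c := Fintype.one_lt_card
  have hcardF : Fintype.card F = c ^ n := card_eq_pow_finrank (K := k)
  set G : Finset F := Finset.univ.filter (fun α : F => IntermediateField.adjoin k {α} = ⊤)
    with hG
  set S : Finset k[X] := G.image (minpoly k) with hS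
  -- properties of members
  have hprop : ∀ f ∈ S, f.Monic ∧ Irreducible f ∧ f.natDegree = n := by
    intro f hf
    obtain ⟨α, hα, rfl⟩ := Finset.mem_image.mp hf
    have hαtop : IntermediateField.adjoin k {α} = ⊤ := (Finset.mem_filter.mp hα).2
    have hint : IsIntegral k α := IsIntegral.of_finite k α
    exact ⟨minpoly.monic hint, minpoly.irreducible hint,
      (Field.primitive_element_iff_minpoly_natDegree_eq k α).mp hαtop⟩
  refine ⟨S, ?_, hprop⟩
  -- fibers of the minpoly map have size at most n
  have hGS : G.card ≤ n * S.card := by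
    refine Finset.card_le_mul_card_image G n (fun f hf => ?_)
    obtain ⟨-, -, hfdeg⟩ := hprop f hf
    have hmon : f.Monic := (hprop f hf).1
    have hsub : (G.filter fun α => minpoly k α = f) ⊆
        (f.map (algebraMap k F)).roots.toFinset := by
      intro α hα
      obtain ⟨hαG, hαf⟩ := Finset.mem_filter.mp hα
      rw [Multiset.mem_toFinset, Polynomial.mem_roots
        ((hmon.map (algebraMap k F)).ne_zero)]
      rw [Polynomial.IsRoot, Polynomial.eval_map, ← Polynomial.aeval_def, ← hαf]
      exact minpoly.aeval k α
    calc (G.filter fun α => minpoly k α = f).card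
        ≤ (f.map (algebraMap k F)).roots.toFinset.card := Finset.card_le_card hsub
      _ ≤ Multiset.card (f.map (algebraMap k F)).roots := Multiset.toFinset_card_le _
      _ ≤ (f.map (algebraMap k F)).natDegree := Polynomial.card_roots' _
      _ = f.natDegree := hmon.natDegree_map _
      _ = n := hfdeg
  -- the complement of G is small
  set B : Finset F := Finset.univ.filter
    (fun α : F => ¬ IntermediateField.adjoin k {α} = ⊤) with hB
  have hGB : G.card + B.card = c ^ n := by
    rw [← hcardF, ← Finset.card_univ]
    exact Finset.card_filter_add_card_filter_not _
  have hBsub : B ⊆ n.properDivisors.biUnion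
      (fun m => Finset.univ.filter fun α : F => α ^ c ^ m = α) := by
    intro α hα
    have hαnt : ¬ IntermediateField.adjoin k {α} = ⊤ := (Finset.mem_filter.mp hα).2
    set L := IntermediateField.adjoin k {α} with hL
    set m := finrank k L with hm
    have hmdvd : m ∣ n := ⟨finrank L F, (finrank_mul_finrank k L F).symm⟩
    have hint : IsIntegral k α := IsIntegral.of_finite k α
    have hmn : m ≠ n := by
      intro hmn
      apply hαnt
      rw [Field.primitive_element_iff_minpoly_natDegree_eq,
        ← IntermediateField.adjoin.finrank hint]
      exact hmn
    have hmlt : m < n := lt_of_le_of_ne (Nat.le_of_dvd hn1 hmdvd) hmn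
    refine Finset.mem_biUnion.mpr ⟨m, Nat.mem_properDivisors.mpr ⟨hmdvd, hmlt⟩, ?_⟩
    refine Finset.mem_filter.mpr ⟨Finset.mem_univ _, ?_⟩
    -- α lies in the subfield L of cardinality c ^ m
    have hLfin : Finite L := Module.finite_of_finite k
    have : Fintype L := Fintype.ofFinite L
    have hcardL : Fintype.card L = c ^ m := card_eq_pow_finrank (K := k)
    set x : L := ⟨α, IntermediateField.mem_adjoin_simple_self k α⟩ with hx
    have := FiniteField.pow_card x
    rw [hcardL] at this
    have := congrArg (algebraMap L F) this
    rwa [map_pow] at this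
  have hBcard : B.card ≤ n * c ^ (n / 2) := by
    calc B.card ≤ (n.properDivisors.biUnion
        (fun m => Finset.univ.filter fun α : F => α ^ c ^ m = α)).card :=
          Finset.card_le_card hBsub
      _ ≤ ∑ m ∈ n.properDivisors,
          (Finset.univ.filter fun α : F => α ^ c ^ m = α).card :=
          Finset.card_biUnion_le
      _ ≤ ∑ m ∈ n.properDivisors, c ^ (n / 2) := by
          refine Finset.sum_le_sum (fun m hm => ?_)
          obtain ⟨hmdvd, hmlt⟩ := Nat.mem_properDivisors.mp hm
          -- m ≤ n / 2
          have hm2 : m ≤ n / 2 := by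
            obtain ⟨t, ht⟩ := hmdvd
            have ht2 : 2 ≤ t := by
              by_contra h
              push_neg at h
              interval_cases t <;> omega
            have h3 : m * 2 ≤ m * t := Nat.mul_le_mul_left m ht2
            omega
          -- the filter is contained in the roots of X ^ c ^ m - X over F
          have hm0 : m ≠ 0 := by
            rintro rfl
            rw [Nat.zero_dvd] at hmdvd
            omega
          have hne : ((X : F[X]) ^ c ^ m - X) ≠ 0 :=
            FiniteField.X_pow_card_pow_sub_X_ne_zero F hm0 hc2
          have hsub2 : (Finset.univ.filter fun α : F => α ^ c ^ m = α) ⊆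
              ((X : F[X]) ^ c ^ m - X).roots.toFinset := by
            intro α hα
            have hα2 := (Finset.mem_filter.mp hα).2
            rw [Multiset.mem_toFinset, Polynomial.mem_roots hne]
            simp [Polynomial.IsRoot, sub_eq_zero, hα2]
          calc (Finset.univ.filter fun α : F => α ^ c ^ m = α).card
              ≤ ((X : F[X]) ^ c ^ m - X).roots.toFinset.card :=
                Finset.card_le_card hsub2
            _ ≤ Multiset.card ((X : F[X]) ^ c ^ m - X).roots :=
                Multiset.toFinset_card_le _
            _ ≤ ((X : F[X]) ^ c ^ m - X).natDegree := Polynomial.card_roots' _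
            _ = c ^ m := FiniteField.X_pow_card_pow_sub_X_natDegree_eq F hm0 hc2
            _ ≤ c ^ (n / 2) := Nat.pow_le_pow_right (le_of_lt hc2) hm2
      _ ≤ n * c ^ (n / 2) := by
          rw [Finset.sum_const, smul_eq_mul]
          refine Nat.mul_le_mul_right _ ?_
          calc n.properDivisors.card ≤ (Finset.range n).card :=
              Finset.card_le_card (fun m hm =>
                Finset.mem_range.mpr (Nat.mem_properDivisors.mp hm).2)
            _ = n := Finset.card_range n
  -- arithmetic: c ^ n ≥ n * K + n * c ^ (n / 2)
  have harith : n * K + n * c ^ (n / 2) ≤ c ^ n := by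
    have h1 : n / 2 + (n - n / 2) = n := by omega
    have h2 : n / 2 ≤ n - n / 2 := by omega
    have h3 : (2 : ℕ) ^ (n / 2) ≤ 2 ^ (n - n / 2) := Nat.pow_le_pow_right (by norm_num) h2
    have h4 : (2 : ℕ) ^ (n - n / 2) ≤ c ^ (n - n / 2) := Nat.pow_le_pow_left hc2 _
    have h5 : c ^ n = c ^ (n / 2) * c ^ (n - n / 2) := by rw [← pow_add, h1]
    have h6 : (n * (K + 1)) * c ^ (n / 2) ≤ c ^ (n - n / 2) * c ^ (n / 2) :=
      Nat.mul_le_mul_right _ (le_trans hK (le_trans h3 h4))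
    have h7 : 1 ≤ c ^ (n / 2) := Nat.one_le_pow _ _ (by omega)
    calc n * K + n * c ^ (n / 2) ≤ n * K * c ^ (n / 2) + n * c ^ (n / 2) := by
          have : n * K ≤ n * K * c ^ (n / 2) := Nat.le_mul_of_pos_right _ (by omega)
          omega
      _ = (n * (K + 1)) * c ^ (n / 2) := by ring
      _ ≤ c ^ (n - n / 2) * c ^ (n / 2) := h6
      _ = c ^ n := by rw [← pow_add]; congr 1; omega
  -- put everything together
  have hfinal : n * K ≤ n * S.card := by omega
  exact Nat.le_of_mul_le_mul_left hfinal hn1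

/-- Let `k` be a finite field, `l/k` a finite field extension of degree `d₀`, `V` a
finite index set and `(e v)` a family of positive integers.  Then there is `N` such
that for every prime `q ≥ N`, every family `(M v)` of finite field extensions of `k`
with `[M v : k] = d₀ * e v * q`, and every finite field extension `E/k` with
`[E : k] = d₀ * (q - 1)`, there is a surjective `k`-algebra homomorphism
`k[t] → (∏ v, M v) × l × E`. -/
theorem surjection_from_polynomial_onto_product_with_section
    (k : Type) [Field k] [Fintype k]
    (l : Type) [Field l] [Algebra k l] [FiniteDimensional k l]
    (d₀ : ℕ) (hd₀ : Module.finrank k l = d₀)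
    (V : Type) [Fintype V] (e : V → ℕ) (he : ∀ v, 0 < e v) :
    ∃ N : ℕ, ∀ q : ℕ, N ≤ q → q.Prime →
      ∀ (M : V → Type) [∀ v, Field (M v)] [∀ v, Algebra k (M v)],
        (∀ v, Module.finrank k (M v) = d₀ * e v * q) →
        ∀ (E : Type) [Field E] [Algebra k E], Module.finrank k E = d₀ * (q - 1) →
          ∃ φ : Polynomial k →ₐ[k] (((v : V) → M v) × l × E),
            Function.Surjective φ := by
  classical
  set cV := Fintype.card V with hcV
  refine ⟨8 * cV + 16, fun q hq hqp M _ _ hM E _ _ hE => ?_⟩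
  have hd0 : 0 < d₀ := hd₀ ▸ finrank_pos
  have hq3 : 3 ≤ q := by omega
  haveI hMfd : ∀ v, FiniteDimensional k (M v) := fun v =>
    FiniteDimensional.of_finrank_pos (by
      rw [hM v]
      exact Nat.mul_pos (Nat.mul_pos hd0 (he v)) (by omega))
  haveI hEfd : FiniteDimensional k E :=
    FiniteDimensional.of_finrank_pos (by rw [hE]; exact Nat.mul_pos hd0 (by omega))
  -- many irreducible polynomials of degree `finrank k (M v)` for each `v`
  have hSv : ∀ v : V, ∃ S : Finset k[X], cV ≤ S.card ∧
      ∀ f ∈ S, f.Monic ∧ Irreducible f ∧ f.natDegree = finrank k (M v) := by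
    intro v
    refine my_many_irred k (M v) cV (my_growth_bound cV _ ?_)
    rw [hM v]
    calc 8 * cV + 16 ≤ q := hq
      _ ≤ d₀ * e v * q := Nat.le_mul_of_pos_left q (Nat.mul_pos hd0 (he v))
  choose S hScard hSmem using hSv
  -- Hall's theorem: a system of distinct representatives
  have hHall : ∀ s : Finset V, s.card ≤ (s.biUnion S).card := by
    intro s
    rcases s.eq_empty_or_nonempty with rfl | ⟨v, hv⟩
    · simp
    · calc s.card ≤ cV := Finset.card_le_univ s
        _ ≤ (S v).card := hScard v
        _ ≤ (s.biUnion S).card :=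
            Finset.card_le_card (fun g hg => Finset.mem_biUnion.mpr ⟨v, hv, hg⟩)
  obtain ⟨f, hfinj, hfmem⟩ :=
    (Finset.all_card_le_biUnion_card_iff_exists_injective S).mp hHall
  have hfM : ∀ v, (f v).Monic := fun v => (hSmem v _ (hfmem v)).1
  have hfI : ∀ v, Irreducible (f v) := fun v => (hSmem v _ (hfmem v)).2.1
  have hfD : ∀ v, (f v).natDegree = d₀ * e v * q := fun v => by
    rw [(hSmem v _ (hfmem v)).2.2, hM v]
  -- polynomials for l and E
  obtain ⟨gl, hglM, hglI, hglD⟩ := my_exists_irred k l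
  obtain ⟨gE, hgEM, hgEI, hgED⟩ := my_exists_irred k E
  rw [hd₀] at hglD
  rw [hE] at hgED
  -- roots and surjections
  have hav : ∀ v, ∃ α : M v, minpoly k α = f v ∧
      Function.Surjective (Polynomial.aeval α : k[X] →ₐ[k] M v) := fun v =>
    my_aeval_surj k (M v) (f v) (hfM v) (hfI v) (by rw [hfD v, hM v])
  choose α hαmin hαsurj using hav
  obtain ⟨β, hβmin, hβsurj⟩ := my_aeval_surj k l gl hglM hglI (by rw [hglD, hd₀])
  obtain ⟨γ, hγmin, hγsurj⟩ := my_aeval_surj k E gE hgEM hgEI (by rw [hgED, hE])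
  -- the homomorphism
  refine ⟨(Pi.algHom k _ (fun v => Polynomial.aeval (α v))).prod
    ((Polynomial.aeval β).prod (Polynomial.aeval γ)), ?_⟩
  rintro ⟨m, x, y⟩
  -- the polynomials indexed by `Option (Option V)`, pairwise distinct
  set P : Option (Option V) → k[X] :=
    fun i => i.elim gl (fun j => j.elim gE (fun v => f v)) with hP
  have hPM : ∀ i, (P i).Monic := by
    rintro (_ | _ | v)
    · exact hglM
    · exact hgEM
    · exact hfM v
  have hPI : ∀ i, Irreducible (P i) := by
    rintro (_ | _ | v)
    · exact hglI
    · exact hgEI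
    · exact hfI v
  -- the three kinds of degrees are pairwise distinct
  have hql : d₀ < d₀ * (q - 1) := by
    have := Nat.mul_lt_mul_of_pos_left (show 1 < q - 1 by omega) hd0
    omega
  have hqv : ∀ v, d₀ < d₀ * e v * q := by
    intro v
    have h1 : 1 < e v * q :=
      lt_of_lt_of_le (show 1 < q by omega) (Nat.le_mul_of_pos_left q (he v))
    have := Nat.mul_lt_mul_of_pos_left h1 hd0
    rw [← mul_assoc] at this
    omega
  have hqEv : ∀ v, d₀ * (q - 1) < d₀ * e v * q := by
    intro v
    have h1 : q - 1 < e v * q :=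
      lt_of_lt_of_le (show q - 1 < q by omega) (Nat.le_mul_of_pos_left q (he v))
    have := Nat.mul_lt_mul_of_pos_left h1 hd0
    rw [← mul_assoc] at this
    omega
  have hPne : ∀ i j, i ≠ j → P i ≠ P j := by
    have hdl : ∀ v : V, gl ≠ f v := fun v h => by
      have := congrArg natDegree h
      rw [hglD, hfD v] at this
      exact absurd this (Nat.ne_of_lt (hqv v))
    have hdE : ∀ v : V, gE ≠ f v := fun v h => by
      have := congrArg natDegree h
      rw [hgED, hfD v] at this
      exact absurd this (Nat.ne_of_lt (hqEv v))
    have hdlE : gl ≠ gE := fun h => by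
      have := congrArg natDegree h
      rw [hglD, hgED] at this
      exact absurd this (Nat.ne_of_lt hql)
    rintro (_ | _ | v) (_ | _ | w) hij
    · exact absurd rfl hij
    · exact hdlE
    · exact hdl w
    · exact hdlE.symm
    · exact absurd rfl hij
    · exact hdE w
    · exact (hdl v).symm
    · exact (hdE v).symm
    · exact fun h => hij (by rw [hfinj h])
  have hcop : Pairwise (Function.onFun IsCoprime fun i => Ideal.span {P i}) := fun i j hij =>
    (Ideal.isCoprime_span_singleton_iff _ _).mpr
      (my_coprime (hPM i) (hPM j) (hPI i) (hPI j) (hPne i j hij))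
  -- choose preimages in each factor
  have hxv : ∀ v, ∃ s : k[X], Polynomial.aeval (α v) s = m v := fun v => hαsurj v (m v)
  choose p hp using hxv
  obtain ⟨pl, hpl⟩ := hβsurj x
  obtain ⟨pE, hpE⟩ := hγsurj y
  set T : Option (Option V) → k[X] :=
    fun i => i.elim pl (fun j => j.elim pE (fun v => p v)) with hT
  obtain ⟨r, hr⟩ := my_crt (fun i => Ideal.span {P i}) hcop T
  -- membership in the span of the minimal polynomial kills `aeval`
  have hzero : ∀ (F : Type) (_ : Field F) (_ : Algebra k F) (a : F) (s : k[X]),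
      s ∈ Ideal.span {minpoly k a} → Polynomial.aeval a s = 0 := by
    intro F _ _ a s hs
    obtain ⟨t, rfl⟩ := (Ideal.mem_span_singleton).mp hs
    rw [map_mul, minpoly.aeval, zero_mul]
  have h1 : ∀ v, Polynomial.aeval (α v) r = m v := by
    intro v
    have hmem := hr (some (some v))
    rw [show P (some (some v)) = f v from rfl, ← hαmin v] at hmem
    have h0 := hzero (M v) _ _ (α v) _ hmem
    rw [map_sub, sub_eq_zero] at h0
    rw [h0, show T (some (some v)) = p v from rfl, hp v]
  have h2 : Polynomial.aeval β r = x := by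
    have hmem := hr none
    rw [show P none = gl from rfl, ← hβmin] at hmem
    have h0 := hzero l _ _ β _ hmem
    rw [map_sub, sub_eq_zero] at h0
    rw [h0, show T none = pl from rfl, hpl]
  have h3 : Polynomial.aeval γ r = y := by
    have hmem := hr (some none)
    rw [show P (some none) = gE from rfl, ← hγmin] at hmem
    have h0 := hzero E _ _ γ _ hmem
    rw [map_sub, sub_eq_zero] at h0
    rw [h0, show T (some none) = pE from rfl, hpE]
  exact ⟨r, Prod.ext (funext h1) (Prod.ext h2 h3)⟩
end
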